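/- Let V : [0,∞) → [0,∞) be continuously differentiable and satisfy V'(t) ≤ -α·V(t)^p - β·V(t)^q whenever V(t) > 0, where α, β > 0, 0 < p < 1, and q > 1. Then there exists T_f ≤ 1/(α(1-p)) + 1/(β(q-1)), independent of V(0), such that V(t) = 0 for all t ≥ T_f. -/

import Mathlib

open Set

/-- Fixed-time stability (Polyakov): if `V ≥ 0` is continuously differentiable
and `V'(t) ≤ -α V(t)^p - β V(t)^q` whenever `V(t) > 0`, with `α, β > 0`,
`0 < p < 1 < q`, then there is a settling time
`T_f ≤ 1/(α(1-p)) + 1/(β(q-1))`, independent of `V 0`, with `V t = 0` for all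
`t ≥ T_f`. -/
theorem fixed_time_stability (V : ℝ → ℝ) (α β p q : ℝ)
    (hα : 0 < α) (hβ : 0 < β) (hp : 0 < p) (hp1 : p < 1) (hq : 1 < q)
    (hC1 : ContDiff ℝ 1 V)
    (hnn : ∀ t, 0 ≤ t → 0 ≤ V t)
    (hineq : ∀ t, 0 ≤ t → 0 < V t → deriv V t ≤ -α * V t ^ p - β * V t ^ q) :
    ∃ Tf : ℝ, Tf ≤ 1 / (α * (1 - p)) + 1 / (β * (q - 1)) ∧
      ∀ t, Tf ≤ t → V t = 0 := by
  have h1p : 0 < 1 - p := by linarith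
  have hq1 : 0 < q - 1 := by linarith
  set T1 : ℝ := 1 / (β * (q - 1)) with hT1def
  set T2 : ℝ := 1 / (α * (1 - p)) with hT2def
  have hT1pos : 0 < T1 := by positivity
  have hT2pos : 0 < T2 := by positivity
  set Tf : ℝ := T2 + T1 with hTfdef
  have hTfpos : 0 < Tf := by positivity
  have hVdiff : Differentiable ℝ V := hC1.differentiable one_ne_zero
  have hAnti : AntitoneOn V (Ici 0) := by
    apply antitoneOn_of_deriv_nonpos (convex_Ici 0) hVdiff.continuous.continuousOn
      hVdiff.differentiableOn
    intro t ht
    rw [interior_Ici] at ht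
    rcases lt_or_eq_of_le (hnn t (le_of_lt ht)) with hVt | hVt
    · have h := hineq t (le_of_lt ht) hVt
      have h1 := Real.rpow_pos_of_pos hVt p
      have h2 := Real.rpow_pos_of_pos hVt q
      nlinarith
    · have hmin : IsLocalMin V t := by
        have hev : ∀ᶠ s in nhds t, 0 < s := eventually_gt_nhds ht
        filter_upwards [hev] with s hs
        rw [← hVt]
        exact hnn s hs.le
      rw [hmin.deriv_eq_zero]
  have key : V Tf = 0 := by
    by_contra hne
    have hVTf : 0 < V Tf := (hnn Tf hTfpos.le).lt_of_ne (Ne.symm hne)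
    have hpos : ∀ t ∈ Icc (0:ℝ) Tf, 0 < V t := fun t ht =>
      lt_of_lt_of_le hVTf (hAnti ht.1 (mem_Ici.mpr hTfpos.le) ht.2)
    -- Phase 1 comparison: U(t) = V(t)^(1-q) - β(q-1)t is monotone
    have hFd : ∀ t ∈ Icc (0:ℝ) Tf,
        HasDerivAt (fun s => V s ^ (1 - q) - β * (q - 1) * s)
          (deriv V t * (1 - q) * V t ^ (1 - q - 1) - β * (q - 1)) t := by
      intro t ht
      have hd : HasDerivAt V (deriv V t) t := (hVdiff t).hasDerivAt
      have h1 := hd.rpow_const (p := 1 - q) (Or.inl (hpos t ht).ne')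
      have h2 : HasDerivAt (fun s : ℝ => β * (q - 1) * s) (β * (q - 1)) t := by
        simpa using (hasDerivAt_id t).const_mul (β * (q - 1))
      exact h1.sub h2
    have hF : MonotoneOn (fun t => V t ^ (1 - q) - β * (q - 1) * t) (Icc 0 Tf) := by
      apply monotoneOn_of_deriv_nonneg (convex_Icc 0 Tf)
        (fun t ht => (hFd t ht).continuousAt.continuousWithinAt)
        (fun t ht => (hFd t (interior_subset ht)).differentiableAt.differentiableWithinAt)
      intro t ht
      rw [interior_Icc] at ht
      rw [(hFd t (Ioo_subset_Icc_self ht)).deriv]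
      have hv := hpos t (Ioo_subset_Icc_self ht)
      have hin := hineq t ht.1.le hv
      have hA : (0:ℝ) < V t ^ (1 - q - 1) := Real.rpow_pos_of_pos hv _
      have hB : (0:ℝ) < V t ^ p := Real.rpow_pos_of_pos hv p
      have hC : (0:ℝ) < V t ^ q := Real.rpow_pos_of_pos hv q
      have hCA : V t ^ q * V t ^ (1 - q - 1) = 1 := by
        rw [← Real.rpow_add hv]
        norm_num
      have h4 : deriv V t * V t ^ (1 - q - 1) ≤ -β := by
        calc deriv V t * V t ^ (1 - q - 1)
            ≤ (-α * V t ^ p - β * V t ^ q) * V t ^ (1 - q - 1) :=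
              mul_le_mul_of_nonneg_right hin hA.le
          _ = -α * (V t ^ p * V t ^ (1 - q - 1)) - β * (V t ^ q * V t ^ (1 - q - 1)) := by
              ring
          _ = -α * (V t ^ p * V t ^ (1 - q - 1)) - β := by rw [hCA]; ring
          _ ≤ -β := by nlinarith [mul_pos hB hA]
      nlinarith [mul_le_mul_of_nonneg_left h4 hq1.le]
    -- Phase 2 comparison: W(t) = V(t)^(1-p) + α(1-p)t is antitone
    have hGd : ∀ t ∈ Icc (0:ℝ) Tf,
        HasDerivAt (fun s => V s ^ (1 - p) + α * (1 - p) * s)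
          (deriv V t * (1 - p) * V t ^ (1 - p - 1) + α * (1 - p)) t := by
      intro t ht
      have hd : HasDerivAt V (deriv V t) t := (hVdiff t).hasDerivAt
      have h1 := hd.rpow_const (p := 1 - p) (Or.inl (hpos t ht).ne')
      have h2 : HasDerivAt (fun s : ℝ => α * (1 - p) * s) (α * (1 - p)) t := by
        simpa using (hasDerivAt_id t).const_mul (α * (1 - p))
      exact h1.add h2
    have hG : AntitoneOn (fun t => V t ^ (1 - p) + α * (1 - p) * t) (Icc 0 Tf) := by
      apply antitoneOn_of_deriv_nonpos (convex_Icc 0 Tf)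
        (fun t ht => (hGd t ht).continuousAt.continuousWithinAt)
        (fun t ht => (hGd t (interior_subset ht)).differentiableAt.differentiableWithinAt)
      intro t ht
      rw [interior_Icc] at ht
      rw [(hGd t (Ioo_subset_Icc_self ht)).deriv]
      have hv := hpos t (Ioo_subset_Icc_self ht)
      have hin := hineq t ht.1.le hv
      have hA : (0:ℝ) < V t ^ (1 - p - 1) := Real.rpow_pos_of_pos hv _
      have hB : (0:ℝ) < V t ^ p := Real.rpow_pos_of_pos hv p
      have hC : (0:ℝ) < V t ^ q := Real.rpow_pos_of_pos hv q
      have hBA : V t ^ p * V t ^ (1 - p - 1) = 1 := by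
        rw [← Real.rpow_add hv]
        norm_num
      have h4 : deriv V t * V t ^ (1 - p - 1) ≤ -α := by
        calc deriv V t * V t ^ (1 - p - 1)
            ≤ (-α * V t ^ p - β * V t ^ q) * V t ^ (1 - p - 1) :=
              mul_le_mul_of_nonneg_right hin hA.le
          _ = -α * (V t ^ p * V t ^ (1 - p - 1)) - β * (V t ^ q * V t ^ (1 - p - 1)) := by
              ring
          _ = -α - β * (V t ^ q * V t ^ (1 - p - 1)) := by rw [hBA]; ring
          _ ≤ -α := by nlinarith [mul_pos hC hA]
      nlinarith [mul_le_mul_of_nonneg_left h4 h1p.le]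
    have h0mem : (0:ℝ) ∈ Icc (0:ℝ) Tf := ⟨le_rfl, hTfpos.le⟩
    have hT1mem : T1 ∈ Icc (0:ℝ) Tf := ⟨hT1pos.le, by linarith⟩
    have hTfmem : Tf ∈ Icc (0:ℝ) Tf := ⟨hTfpos.le, le_rfl⟩
    have e1 := hF h0mem hT1mem hT1pos.le
    simp only [mul_zero, sub_zero] at e1
    have hβq : β * (q - 1) * T1 = 1 := by
      rw [hT1def]
      field_simp
    have hU0 : 0 < V 0 ^ (1 - q) := Real.rpow_pos_of_pos (hpos 0 h0mem) _
    have hUT1 : 1 < V T1 ^ (1 - q) := by linarith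
    have hVT1lt : V T1 < 1 := by
      rcases (Real.one_lt_rpow_iff_of_pos (hpos T1 hT1mem)).mp hUT1 with ⟨_, h⟩ | ⟨h, _⟩
      · linarith
      · exact h
    have e2 := hG hT1mem hTfmem (by linarith : T1 ≤ Tf)
    have hαp : α * (1 - p) * Tf - α * (1 - p) * T1 = 1 := by
      have : α * (1 - p) * T2 = 1 := by
        rw [hT2def]; field_simp
      rw [hTfdef]; ring_nf; ring_nf at this; linarith
    have hWT1 : V T1 ^ (1 - p) < 1 :=
      Real.rpow_lt_one (hpos T1 hT1mem).le hVT1lt h1p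
    have hWTf : 0 < V Tf ^ (1 - p) := Real.rpow_pos_of_pos hVTf _
    simp only at e2
    linarith
  refine ⟨Tf, le_rfl, fun t ht => ?_⟩
  have h0t : (0:ℝ) ≤ t := le_trans hTfpos.le ht
  have h1 := hAnti (mem_Ici.mpr hTfpos.le) (mem_Ici.mpr h0t) ht
  have h2 := hnn t h0t
  rw [key] at h1
  linarith
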